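/- arXiv:2202.03654 — 4 statements merged into one kernel-verified Lean document; each statement's English description precedes it below -/
import Mathlib

section
/- The dimension of RM(m,r), i.e., the number of rows of the matrix [[1,0],[1,1]]^{⊗m} with Hamming weight at least 2^{m-r}, equals the sum over i = 0 to r of binomial(m,i). -/
open Matrix Kronecker

/-- The `m`-th Kronecker power of a 2×2 matrix, as a `2^m × 2^m` matrix. -/
def kronPow {R : Type*} [CommRing R] (A : Matrix (Fin 2) (Fin 2) R) :
    (m : ℕ) → Matrix (Fin (2 ^ m)) (Fin (2 ^ m)) R
  | 0 => 1
  | m + 1 =>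
    Matrix.reindex (finProdFinEquiv.trans (finCongr (by rw [pow_succ]; ring)))
      (finProdFinEquiv.trans (finCongr (by rw [pow_succ]; ring))) (A ⊗ₖ kronPow A m)

/-- The polarization kernel `[[1,0],[1,1]]` over GF(2). -/
def Fmat : Matrix (Fin 2) (Fin 2) (ZMod 2) := !![1, 0; 1, 1]

lemma hn_equiv {ι κ M : Type*} [Fintype ι] [Fintype κ] [DecidableEq M] [Zero M]
    (σ : ι ≃ κ) (v : κ → M) : hammingNorm (fun i => v (σ i)) = hammingNorm v := by
  simp only [hammingNorm]
  exact Finset.card_equiv σ (by simp)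

lemma hn_mul {n : ℕ} (v : Fin 2 → ZMod 2) (w : Fin n → ZMod 2) :
    hammingNorm (fun p : Fin 2 × Fin n => v p.1 * w p.2)
      = hammingNorm v * hammingNorm w := by
  simp only [hammingNorm]
  rw [← Finset.card_product]
  congr 1
  ext p
  simp [mul_ne_zero_iff, Finset.mem_filter]

def eqv (m : ℕ) : Fin 2 × Fin (2 ^ m) ≃ Fin (2 ^ (m + 1)) :=
  finProdFinEquiv.trans (finCongr (by rw [pow_succ]; ring))

lemma key (m : ℕ) (j : Fin (2 ^ (m + 1))) :
    hammingNorm (kronPow Fmat (m + 1) j)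
      = hammingNorm (Fmat ((eqv m).symm j).1)
        * hammingNorm (kronPow Fmat m ((eqv m).symm j).2) := by
  set e := eqv m with he
  have : kronPow Fmat (m + 1) j
      = fun k => (Fmat ⊗ₖ kronPow Fmat m) (e.symm j) (e.symm k) := rfl
  rw [this]
  rw [hn_equiv e.symm (fun p => (Fmat ⊗ₖ kronPow Fmat m) (e.symm j) p)]
  exact hn_mul _ _

lemma hnF : ∀ b : Fin 2, hammingNorm (Fmat b) = 2 ^ (b : ℕ) := by decide

lemma hn_pos : ∀ m, ∀ j : Fin (2 ^ m), 1 ≤ hammingNorm (kronPow Fmat m j) := by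
  intro m
  induction m with
  | zero => decide
  | succ m ih =>
    intro j
    rw [key m j, hnF]
    exact Nat.one_le_iff_ne_zero.2 (Nat.mul_ne_zero (by positivity)
      (Nat.one_le_iff_ne_zero.1 (ih _)))

lemma pascal (m s : ℕ) :
    ∑ i ∈ Finset.Ico s (m + 2), (m + 1).choose i
      = ∑ i ∈ Finset.Ico s (m + 1), m.choose i
        + ∑ i ∈ Finset.Ico (s - 1) (m + 1), m.choose i := by
  rcases s with _ | t
  · simp only [Nat.zero_sub, Nat.Ico_zero_eq_range]
    rw [Nat.sum_range_choose, Nat.sum_range_choose]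
    rw [pow_succ]
    omega
  · have h1 : ∑ i ∈ Finset.Ico (t + 1) (m + 2), (m + 1).choose i
        = ∑ i ∈ Finset.range (m + 1 - t), (m + 1).choose (t + 1 + i) := by
      rw [Finset.sum_Ico_eq_sum_range, show m + 2 - (t + 1) = m + 1 - t from by omega]
    have h2 : ∑ i ∈ Finset.Ico t (m + 1), m.choose i
        = ∑ i ∈ Finset.range (m + 1 - t), m.choose (t + i) := by
      rw [Finset.sum_Ico_eq_sum_range]
    have h3 : ∑ i ∈ Finset.Ico (t + 1) (m + 2), m.choose i
        = ∑ i ∈ Finset.range (m + 1 - t), m.choose (t + 1 + i) := by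
      rw [Finset.sum_Ico_eq_sum_range, show m + 2 - (t + 1) = m + 1 - t from by omega]
    have h4 : ∑ i ∈ Finset.Ico (t + 1) (m + 2), m.choose i
        = ∑ i ∈ Finset.Ico (t + 1) (m + 1), m.choose i := by
      by_cases h : t + 1 ≤ m + 1
      · rw [Finset.sum_Ico_succ_top h, Nat.choose_succ_self, add_zero]
      · rw [Finset.Ico_eq_empty (by omega), Finset.Ico_eq_empty (by omega)]
    rw [h1]
    have : ∀ i, (m + 1).choose (t + 1 + i) = m.choose (t + i) + m.choose (t + i + 1) := by
      intro i
      have : t + 1 + i = (t + i) + 1 := by omega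
      rw [this, Nat.choose_succ_succ]
    rw [Finset.sum_congr rfl fun i _ => this i, Finset.sum_add_distrib, ← h2]
    have h5 : ∑ i ∈ Finset.range (m + 1 - t), m.choose (t + i + 1)
        = ∑ i ∈ Finset.Ico (t + 1) (m + 1), m.choose i := by
      rw [← h4, h3]
      exact Finset.sum_congr rfl fun i _ => by rw [show t + 1 + i = t + i + 1 from by omega]
    rw [h5]
    simp [Nat.add_sub_cancel]
    ring

lemma count (m s : ℕ) :
    (Finset.univ.filter fun j : Fin (2 ^ m) =>
        2 ^ s ≤ hammingNorm (kronPow Fmat m j)).card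
      = ∑ i ∈ Finset.Ico s (m + 1), m.choose i := by
  induction m generalizing s with
  | zero =>
    have h1 : ∀ j : Fin (2 ^ 0), hammingNorm (kronPow Fmat 0 j) = 1 := by decide
    rcases s with _ | t
    · simp [h1]
    · have : ¬ (2 ^ (t + 1) ≤ 1) := by
        have := Nat.one_lt_two_pow (n := t + 1) (by omega)
        omega
      rw [Finset.Ico_eq_empty (by omega), Finset.sum_empty]
      simp [h1, this]
  | succ m ih =>
    have hstep : (Finset.univ.filter fun j : Fin (2 ^ (m + 1)) =>
          2 ^ s ≤ hammingNorm (kronPow Fmat (m + 1) j)).card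
        = (Finset.univ.filter fun p : Fin 2 × Fin (2 ^ m) =>
            2 ^ s ≤ 2 ^ ((p.1 : ℕ)) * hammingNorm (kronPow Fmat m p.2)).card := by
      refine (Finset.card_equiv (eqv m) ?_).symm
      intro p
      simp only [Finset.mem_filter, Finset.mem_univ, true_and]
      rw [key m (eqv m p), Equiv.symm_apply_apply, hnF]
    rw [hstep, Finset.card_filter, ← Finset.univ_product_univ, Finset.sum_product,
      Fin.sum_univ_two]
    have hb0 : (∑ j : Fin (2 ^ m),
        if 2 ^ s ≤ 2 ^ (((0 : Fin 2) : ℕ)) * hammingNorm (kronPow Fmat m j) then 1 else 0)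
        = ∑ i ∈ Finset.Ico s (m + 1), m.choose i := by
      rw [← ih s, Finset.card_filter]
      exact Finset.sum_congr rfl fun j _ => by norm_num
    have hb1 : (∑ j : Fin (2 ^ m),
        if 2 ^ s ≤ 2 ^ (((1 : Fin 2) : ℕ)) * hammingNorm (kronPow Fmat m j) then 1 else 0)
        = ∑ i ∈ Finset.Ico (s - 1) (m + 1), m.choose i := by
      rw [← ih (s - 1), Finset.card_filter]
      refine Finset.sum_congr rfl fun j _ => ?_
      congr 1
      have hpos := hn_pos m j
      rw [show (((1 : Fin 2) : ℕ)) = 1 from rfl, pow_one]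
      rcases s with _ | t
      · simp only [pow_zero, Nat.zero_sub, eq_iff_iff]
        omega
      · simp only [Nat.add_sub_cancel, eq_iff_iff]
        rw [pow_succ, mul_comm (2 ^ t) 2]
        constructor
        · intro h'
          exact Nat.le_of_mul_le_mul_left h' two_pos
        · intro h'
          exact Nat.mul_le_mul_left 2 h'
    rw [hb0, hb1, pascal]

/-- The number of rows of `[[1,0],[1,1]]^{⊗m}` with Hamming weight at least `2^(m-r)`
(the dimension of RM(m,r)) equals `∑_{i=0}^{r} C(m,i)`. -/
theorem stmt2 (m r : ℕ) (hr : r ≤ m) :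
    (Finset.univ.filter fun j : Fin (2 ^ m) =>
        2 ^ (m - r) ≤ hammingNorm (kronPow Fmat m j)).card
      = ∑ i ∈ Finset.range (r + 1), m.choose i := by
  rw [count m (m - r)]
  rw [← Nat.Ico_zero_eq_range]
  refine Finset.sum_nbij' (fun i => m - i) (fun i => m - i) ?_ ?_ ?_ ?_ ?_
  · intro i hi
    simp only [Finset.mem_Ico] at hi ⊢
    omega
  · intro i hi
    simp only [Finset.mem_Ico] at hi ⊢
    omega
  · intro i hi
    simp only [Finset.mem_Ico] at hi
    show m - (m - i) = i
    omega
  · intro i hi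
    simp only [Finset.mem_Ico] at hi
    show m - (m - i) = i
    omega
  · intro i hi
    simp only [Finset.mem_Ico] at hi
    rw [Nat.choose_symm (by omega)]
end

section
/- The Kronecker product of the generator matrices of RM(m1,r1) and RM(m2,r2) generates a code that is a subcode of RM(m1+m2, r1+r2). -/
open Matrix Kronecker

/-- The rows of the generator matrix of RM(m,r): rows of `[[1,0],[1,1]]^{⊗m}` of
Hamming weight at least `2^(m-r)`. -/
def RMrows (m r : ℕ) : Set (Fin (2 ^ m) → ZMod 2) :=
  {v | (∃ i, v = kronPow Fmat m i) ∧ 2 ^ (m - r) ≤ hammingNorm v}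

/-- The Reed-Muller code RM(m,r). -/
def RMcode (m r : ℕ) : Submodule (ZMod 2) (Fin (2 ^ m) → ZMod 2) :=
  Submodule.span (ZMod 2) (RMrows m r)

/-- Identification of `Fin (2^m1) × Fin (2^m2)` with `Fin (2^(m1+m2))`. -/
def dimEquiv (m1 m2 : ℕ) : Fin (2 ^ m1) × Fin (2 ^ m2) ≃ Fin (2 ^ (m1 + m2)) :=
  finProdFinEquiv.trans (finCongr (pow_add 2 m1 m2).symm)

lemma divlt {s : ℕ} (i : Fin (2^(s+1))) : i.val / 2^s < 2 :=
  Nat.div_lt_of_lt_mul (lt_of_lt_of_eq i.isLt (pow_succ 2 s))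

lemma modlt {s : ℕ} (i : Fin (2^(s+1))) : i.val % 2^s < 2^s :=
  Nat.mod_lt _ (pow_pos (by norm_num : (0:ℕ) < 2) s)

lemma kronPow_succ_apply (s : ℕ) {R : Type*} [CommRing R] (A : Matrix (Fin 2) (Fin 2) R)
    (i k : Fin (2^(s+1))) :
    kronPow A (s+1) i k = A ⟨i.val / 2^s, divlt i⟩ ⟨k.val / 2^s, divlt k⟩ *
      kronPow A s ⟨i.val % 2^s, modlt i⟩ ⟨k.val % 2^s, modlt k⟩ := by
  simp [kronPow, finProdFinEquiv, Fin.divNat, Fin.modNat]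

lemma kronPow_cast {R : Type*} [CommRing R] (A : Matrix (Fin 2) (Fin 2) R) {m n : ℕ}
    (h : m = n) (i j : Fin (2^m)) :
    kronPow A n (Fin.cast (by rw [h]) i) (Fin.cast (by rw [h]) j) = kronPow A m i j := by
  subst h; rfl

lemma kronPow_kron {R : Type*} [CommRing R] (A : Matrix (Fin 2) (Fin 2) R) :
    ∀ (m1 m2 : ℕ) (i k : Fin (2^m1)) (j l : Fin (2^m2)) (a b : Fin (2^(m1+m2))),
    (a : ℕ) = j + 2^m2 * i → (b : ℕ) = l + 2^m2 * k →
    kronPow A (m1+m2) a b = kronPow A m1 i k * kronPow A m2 j l := by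
  intro m1
  induction m1 with
  | zero =>
      intro m2 i k j l a b ha hb
      have hi : (i : ℕ) = 0 := Nat.lt_one_iff.mp (by simpa using i.isLt)
      have hk : (k : ℕ) = 0 := Nat.lt_one_iff.mp (by simpa using k.isLt)
      have h0 : m2 = 0 + m2 := (Nat.zero_add m2).symm
      have hae : a = Fin.cast (by rw [← h0]) j := by
        apply Fin.ext; simp [ha, hi]
      have hbe : b = Fin.cast (by rw [← h0]) l := by
        apply Fin.ext; simp [hb, hk]
      rw [hae, hbe, kronPow_cast A h0]
      have : kronPow A 0 i k = 1 := by
        have : i = k := Fin.ext (hi.trans hk.symm)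
        subst this
        simp [kronPow]
      rw [this, one_mul]
  | succ s IH =>
      intro m2 i k j l a b ha hb
      have hP : (0:ℕ) < 2^s := pow_pos (by norm_num : (0:ℕ) < 2) s
      have hQ : (0:ℕ) < 2^m2 := pow_pos (by norm_num : (0:ℕ) < 2) m2
      have h0 : (s+m2)+1 = (s+1)+m2 := by omega
      have hlt : ∀ x : Fin (2^((s+1)+m2)), (x:ℕ) < 2^((s+m2)+1) := by
        intro x
        exact lt_of_lt_of_eq x.isLt (congrArg (2 ^ ·) (by omega : (s+1)+m2 = (s+m2)+1))
      set a0 : Fin (2^((s+m2)+1)) := ⟨a.val, hlt a⟩ with ha0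
      set b0 : Fin (2^((s+m2)+1)) := ⟨b.val, hlt b⟩ with hb0
      have hae : a = Fin.cast (by rw [h0]) a0 := by apply Fin.ext; simp [ha0]
      have hbe : b = Fin.cast (by rw [h0]) b0 := by apply Fin.ext; simp [hb0]
      rw [hae, hbe, kronPow_cast A h0, kronPow_succ_apply]
      rw [kronPow_succ_apply s A i k]
      -- value computations
      have hjQ : (j:ℕ) < 2^m2 := j.isLt
      have hi' : (i:ℕ) % 2^s < 2^s := Nat.mod_lt _ hP
      have hk' : (k:ℕ) % 2^s < 2^s := Nat.mod_lt _ hP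
      have idecomp : (i:ℕ) = (i:ℕ) % 2^s + 2^s * ((i:ℕ) / 2^s) := by
        rw [Nat.mod_add_div]
      have kdecomp : (k:ℕ) = (k:ℕ) % 2^s + 2^s * ((k:ℕ) / 2^s) := by
        rw [Nat.mod_add_div]
      have hsm : (2:ℕ)^(s+m2) = 2^m2 * 2^s := by rw [pow_add]; ring
      have haval : (a0:ℕ) = ((j:ℕ) + 2^m2 * ((i:ℕ) % 2^s)) + 2^(s+m2) * ((i:ℕ) / 2^s) := by
        simp only [ha0]
        rw [ha, hsm]
        conv_lhs => rw [idecomp]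
        ring
      have hbval : (b0:ℕ) = ((l:ℕ) + 2^m2 * ((k:ℕ) % 2^s)) + 2^(s+m2) * ((k:ℕ) / 2^s) := by
        simp only [hb0]
        rw [hb, hsm]
        conv_lhs => rw [kdecomp]
        ring
      have hsmall : ∀ (y : ℕ), y < 2^m2 → ∀ z < 2^s, y + 2^m2 * z < 2^(s+m2) := by
        intro y hy z hz
        rw [hsm]
        calc y + 2^m2 * z < 2^m2 * (z+1) := by rw [Nat.mul_succ]; omega
        _ ≤ 2^m2 * 2^s := by exact Nat.mul_le_mul_left _ (by omega)
      have hA : ((j:ℕ) + 2^m2 * ((i:ℕ) % 2^s)) < 2^(s+m2) := hsmall _ hjQ _ hi'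
      have hB : ((l:ℕ) + 2^m2 * ((k:ℕ) % 2^s)) < 2^(s+m2) := hsmall _ l.isLt _ hk'
      have hadiv : (a0:ℕ) / 2^(s+m2) = (i:ℕ) / 2^s := by
        rw [haval, Nat.add_mul_div_left _ _ (pow_pos (by norm_num : (0:ℕ) < 2) (s+m2)),
          Nat.div_eq_of_lt hA, Nat.zero_add]
      have hbdiv : (b0:ℕ) / 2^(s+m2) = (k:ℕ) / 2^s := by
        rw [hbval, Nat.add_mul_div_left _ _ (pow_pos (by norm_num : (0:ℕ) < 2) (s+m2)),
          Nat.div_eq_of_lt hB, Nat.zero_add]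
      have hamod : (a0:ℕ) % 2^(s+m2) = (j:ℕ) + 2^m2 * ((i:ℕ) % 2^s) := by
        rw [haval, Nat.add_mul_mod_self_left, Nat.mod_eq_of_lt hA]
      have hbmod : (b0:ℕ) % 2^(s+m2) = (l:ℕ) + 2^m2 * ((k:ℕ) % 2^s) := by
        rw [hbval, Nat.add_mul_mod_self_left, Nat.mod_eq_of_lt hB]
      have hmid := IH m2 ⟨(i:ℕ) % 2^s, hi'⟩ ⟨(k:ℕ) % 2^s, hk'⟩ j l
        ⟨(a0:ℕ) % 2^(s+m2), Nat.mod_lt _ (pow_pos (by norm_num : (0:ℕ) < 2) (s+m2))⟩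
        ⟨(b0:ℕ) % 2^(s+m2), Nat.mod_lt _ (pow_pos (by norm_num : (0:ℕ) < 2) (s+m2))⟩
        (by simpa using hamod) (by simpa using hbmod)
      rw [hmid]
      have e1 : (⟨(a0:ℕ) / 2^(s+m2), divlt a0⟩ : Fin 2) = ⟨(i:ℕ) / 2^s, divlt i⟩ := by
        apply Fin.ext; simpa using hadiv
      have e2 : (⟨(b0:ℕ) / 2^(s+m2), divlt b0⟩ : Fin 2) = ⟨(k:ℕ) / 2^s, divlt k⟩ := by
        apply Fin.ext; simpa using hbdiv
      rw [e1, e2]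
      ring

lemma dimEquiv_val (m1 m2 : ℕ) (p : Fin (2^m1) × Fin (2^m2)) :
    ((dimEquiv m1 m2 p : Fin (2^(m1+m2))) : ℕ) = (p.2 : ℕ) + 2^m2 * (p.1 : ℕ) := by
  simp [dimEquiv, finProdFinEquiv]

lemma ham_kron (m1 m2 : ℕ) (u : Fin (2^m1) → ZMod 2) (v : Fin (2^m2) → ZMod 2) :
    hammingNorm (fun t : Fin (2^(m1+m2)) =>
      u ((dimEquiv m1 m2).symm t).1 * v ((dimEquiv m1 m2).symm t).2)
      = hammingNorm u * hammingNorm v := by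
  classical
  unfold hammingNorm
  rw [← Finset.card_product]
  apply Finset.card_bij (fun t _ => (dimEquiv m1 m2).symm t)
  · intro t ht
    simp only [Finset.mem_filter, Finset.mem_univ, true_and] at ht
    rw [mul_ne_zero_iff] at ht
    simp [Finset.mem_product, ht.1, ht.2]
  · intro a _ b _ hab
    exact (dimEquiv m1 m2).symm.injective hab
  · intro p hp
    refine ⟨dimEquiv m1 m2 p, ?_, by simp⟩
    simp only [Finset.mem_product, Finset.mem_filter, Finset.mem_univ, true_and] at hp ⊢
    rw [Equiv.symm_apply_apply, mul_ne_zero_iff]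
    exact hp


/-- The code generated by the Kronecker product of the generator matrices of
RM(m1,r1) and RM(m2,r2), viewed as a length-`2^(m1+m2)` code, is a subcode of
RM(m1+m2, r1+r2). -/
theorem stmt6 (m1 r1 m2 r2 : ℕ) (h1 : r1 ≤ m1) (h2 : r2 ≤ m2) :
    Submodule.span (ZMod 2)
        {w : Fin (2 ^ (m1 + m2)) → ZMod 2 |
          ∃ u ∈ RMrows m1 r1, ∃ v ∈ RMrows m2 r2,
            w = fun t => u ((dimEquiv m1 m2).symm t).1 * v ((dimEquiv m1 m2).symm t).2}
      ≤ RMcode (m1 + m2) (r1 + r2) := by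
  rw [Submodule.span_le]
  rintro w ⟨u, ⟨⟨iu, rfl⟩, hwu⟩, v, ⟨⟨iv, rfl⟩, hwv⟩, rfl⟩
  apply Submodule.subset_span
  constructor
  · refine ⟨dimEquiv m1 m2 (iu, iv), ?_⟩
    funext t
    obtain ⟨p, rfl⟩ := (dimEquiv m1 m2).surjective t
    rw [Equiv.symm_apply_apply]
    exact (kronPow_kron Fmat m1 m2 iu p.1 iv p.2 _ _
      (dimEquiv_val m1 m2 (iu, iv)) (dimEquiv_val m1 m2 p)).symm
  · rw [ham_kron]
    calc (2:ℕ) ^ (m1 + m2 - (r1 + r2)) = 2 ^ ((m1 - r1) + (m2 - r2)) := by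
          congr 1; omega
    _ = 2 ^ (m1 - r1) * 2 ^ (m2 - r2) := pow_add 2 _ _
    _ ≤ _ := Nat.mul_le_mul hwu hwv
end

section
/- For all integers r1 ≤ m1 and r2 ≤ m2 with r1, r2 ≥ 0, the product of the binomial sums satisfies (∑_{i=0}^{r1} C(m1,i)) · (∑_{j=0}^{r2} C(m2,j)) ≤ ∑_{t=0}^{r1+r2} C(m1+m2, t). -/
/-- The dimension of the product of RM(m1,r1) and RM(m2,r2) is at most the dimension
of RM(m1+m2, r1+r2):
`(∑_{i=0}^{r1} C(m1,i)) · (∑_{j=0}^{r2} C(m2,j)) ≤ ∑_{t=0}^{r1+r2} C(m1+m2,t)`. -/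
theorem stmt7 (m1 m2 r1 r2 : ℕ) (h1 : r1 ≤ m1) (h2 : r2 ≤ m2) :
    (∑ i ∈ Finset.range (r1 + 1), m1.choose i) *
        (∑ j ∈ Finset.range (r2 + 1), m2.choose j)
      ≤ ∑ t ∈ Finset.range (r1 + r2 + 1), (m1 + m2).choose t := by
  have hrhs : ∑ t ∈ Finset.range (r1 + r2 + 1), (m1 + m2).choose t
      = ∑ p ∈ (Finset.range (r1 + r2 + 1)).biUnion
          (fun t => Finset.HasAntidiagonal.antidiagonal t), m1.choose p.1 * m2.choose p.2 := by
    rw [Finset.sum_biUnion]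
    · exact Finset.sum_congr rfl fun t _ => Nat.add_choose_eq m1 m2 t
    · intro a _ b _ hab
      simp only [Finset.disjoint_left, Finset.HasAntidiagonal.mem_antidiagonal]
      intro p hp hp'
      exact hab (hp ▸ hp')
  rw [hrhs, Finset.sum_mul_sum, ← Finset.sum_product']
  apply Finset.sum_le_sum_of_subset
  intro p hp
  simp only [Finset.mem_product, Finset.mem_range] at hp
  simp only [Finset.mem_biUnion, Finset.mem_range, Finset.HasAntidiagonal.mem_antidiagonal]
  exact ⟨p.1 + p.2, by omega, rfl⟩
end

section
/- Let G be the generator matrix of RM(m,1) with the first row all-ones, and for i ≥ 2 let I_{0,i} and I_{1,i} be the sets of indices j ∈ {1,…,2^m} such that the codeword corresponding to Hadamard column h_j has message bit u_i = 0 and u_i = 1 respectively. Then max over codewords with u_i = 0 of ⟨l, 1−2c⟩ equals max over j ∈ I_{0,i} of |l_WH(j)|, and similarly with 1 and I_{1,i}, where l_WH = l·H. -/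
open Matrix Kronecker

/-- The Sylvester–Hadamard kernel `[[1,1],[1,-1]]` over ℝ. -/
def Hmat : Matrix (Fin 2) (Fin 2) ℝ := !![1, 1; 1, -1]

/-- Generator matrix of RM(m,1): first row all-ones, remaining rows enumerate all
binary `m`-vectors as columns (MSB first, matching the Hadamard Kronecker order). -/
def Grm (m : ℕ) : Matrix (Fin (m + 1)) (Fin (2 ^ m)) (ZMod 2) :=
  fun i j => if i.val = 0 then 1 else if j.val.testBit (m - i.val) then 1 else 0

/-- BPSK modulation `c ↦ 1 - 2c`. -/
def bpsk {n : ℕ} (c : Fin n → ZMod 2) : Fin n → ℝ := fun j => 1 - 2 * ((c j).val : ℝ)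

/- ---------- auxiliary definitions and lemmas ---------- -/

def chi (a : ZMod 2) : ℝ := if a = 0 then 1 else -1

lemma zmod2_cases (a : ZMod 2) : a = 0 ∨ a = 1 := by fin_cases a <;> [exact Or.inl rfl; exact Or.inr rfl]

lemma bpsk_eq_chi {n : ℕ} (c : Fin n → ZMod 2) (j : Fin n) : bpsk c j = chi (c j) := by
  rcases zmod2_cases (c j) with h | h <;>
    simp [bpsk, h, chi, show (1 : ZMod 2).val = 1 from rfl]
  norm_num

lemma chi_add (a b : ZMod 2) : chi (a + b) = chi a * chi b := by
  rcases zmod2_cases a with h | h <;> rcases zmod2_cases b with h' | h' <;>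
    simp [h, h', chi, show (1:ZMod 2)+1 = 0 from by decide]

lemma chi_sum {ι : Type*} (s : Finset ι) (f : ι → ZMod 2) :
    chi (∑ x ∈ s, f x) = ∏ x ∈ s, chi (f x) := by
  classical
  induction s using Finset.induction with
  | empty => simp [chi]
  | insert a s h ih =>
    rw [Finset.sum_insert h, Finset.prod_insert h, chi_add, ih]

lemma chi_mul_le_abs (a : ZMod 2) (w : ℝ) : chi a * w ≤ |w| := by
  rcases zmod2_cases a with h | h <;> simp [h, chi]
  · exact le_abs_self w
  · exact neg_le_abs w

lemma kronPow_Hmat_apply : ∀ (m : ℕ) (j k : Fin (2 ^ m)),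
    kronPow Hmat m j k =
      ∏ t ∈ Finset.range m, (if j.val.testBit t ∧ k.val.testBit t then (-1 : ℝ) else 1) := by
  intro m
  induction m with
  | zero =>
    intro j k
    have hj : j = 0 := by ext; omega
    have hk : k = 0 := by ext; omega
    subst hj hk
    simp [kronPow, Matrix.one_apply]
  | succ m ih =>
    intro j k
    rw [kronPow, Matrix.reindex_apply, Matrix.submatrix_apply, Equiv.symm_trans_apply,
      Equiv.symm_trans_apply, finProdFinEquiv_symm_apply, finProdFinEquiv_symm_apply,
      Matrix.kroneckerMap_apply]
    set aj := ((finCongr (by rw [pow_succ]; ring) : Fin (2*2^m) ≃ Fin (2^(m+1))).symm j).divNat with haj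
    set ak := ((finCongr (by rw [pow_succ]; ring) : Fin (2*2^m) ≃ Fin (2^(m+1))).symm k).divNat with hak
    set bj := ((finCongr (by rw [pow_succ]; ring) : Fin (2*2^m) ≃ Fin (2^(m+1))).symm j).modNat with hbj
    set bk := ((finCongr (by rw [pow_succ]; ring) : Fin (2*2^m) ≃ Fin (2^(m+1))).symm k).modNat with hbk
    have hbjv : bj.val = j.val % 2^m := rfl
    have hbkv : bk.val = k.val % 2^m := rfl
    have hajv : aj.val = j.val / 2^m := rfl
    have hakv : ak.val = k.val / 2^m := rfl
    clear_value aj ak bj bk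
    clear haj hak hbj hbk
    rw [ih bj bk, Finset.prod_range_succ]
    have hlow : ∀ x ∈ Finset.range m,
        (if bj.val.testBit x ∧ bk.val.testBit x then (-1:ℝ) else 1)
          = (if j.val.testBit x ∧ k.val.testBit x then (-1:ℝ) else 1) := by
      intro t ht
      rw [Finset.mem_range] at ht
      rw [hbjv, hbkv, Nat.testBit_mod_two_pow, Nat.testBit_mod_two_pow]
      simp [ht]
    rw [Finset.prod_congr rfl hlow]
    have hbit : ∀ (x : Fin (2^(m+1))) (a : Fin 2), a.val = x.val / 2^m →
        x.val.testBit m = decide (a.val = 1) := by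
      intro x a ha
      rw [Nat.testBit_eq_decide_div_mod_eq, ← ha, Nat.mod_eq_of_lt a.isLt]
    have htop : (if j.val.testBit m ∧ k.val.testBit m then (-1:ℝ) else 1) = Hmat aj ak := by
      rw [hbit j aj hajv, hbit k ak hakv]
      fin_cases aj <;> fin_cases ak <;> simp [Hmat]
    rw [← htop, mul_comm]

/-- The key correspondence: the BPSK correlation of a codeword equals (up to the
sign `chi (u 0)`) the Walsh–Hadamard transform entry at the matching column. -/
lemma key_sum (m : ℕ) (l : Fin (2 ^ m) → ℝ) (u : Fin (m + 1) → ZMod 2) (j' : Fin (2 ^ m))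
    (hcorr : ∀ i : Fin (m + 1), i.val ≠ 0 → (u i = 1 ↔ j'.val.testBit (m - i.val))) :
    ∑ j, l j * bpsk (Matrix.vecMul u (Grm m)) j
      = chi (u 0) * Matrix.vecMul l (kronPow Hmat m) j' := by
  have hterm : ∀ j : Fin (2 ^ m),
      bpsk (Matrix.vecMul u (Grm m)) j = chi (u 0) * kronPow Hmat m j j' := by
    intro j
    rw [bpsk_eq_chi]
    have hvm : Matrix.vecMul u (Grm m) j = ∑ x, u x * Grm m x j := by
      simp [Matrix.vecMul, dotProduct]
    rw [hvm, chi_sum, Fin.prod_univ_succ]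
    have h0 : u 0 * Grm m 0 j = u 0 := by
      simp [Grm]
    rw [h0]
    congr 1
    rw [kronPow_Hmat_apply]
    rw [← Fin.prod_univ_eq_prod_range (fun t => if j.val.testBit t ∧ j'.val.testBit t then (-1:ℝ) else 1) m]
    rw [← Fintype.prod_equiv (Fin.revPerm : Equiv.Perm (Fin m))
      (fun x => if j.val.testBit x.rev.val ∧ j'.val.testBit x.rev.val then (-1:ℝ) else 1)
      (fun x => if j.val.testBit x.val ∧ j'.val.testBit x.val then (-1:ℝ) else 1)
      (fun x => by simp)]
    refine Finset.prod_congr rfl fun x _ => ?_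
    have hxv : (x.rev).val = m - (x.val + 1) := Fin.val_rev x
    have hGe : Grm m x.succ j = if j.val.testBit (m - (x.val + 1)) then 1 else 0 := by
      simp [Grm, Fin.val_succ]
    have hu := hcorr x.succ (by simp [Fin.val_succ])
    rw [Fin.val_succ] at hu
    rw [hGe, hxv]
    by_cases hQ : j.val.testBit (m - (x.val + 1))
    · by_cases hP : j'.val.testBit (m - (x.val + 1))
      · have : u x.succ = 1 := hu.mpr hP
        simp [hQ, hP, this, chi]
      · have : u x.succ = 0 := by
          rcases zmod2_cases (u x.succ) with h | h
          · exact h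
          · exact absurd (hu.mp h) hP
        simp [hQ, hP, this, chi]
    · simp [hQ, chi]
  calc ∑ j, l j * bpsk (Matrix.vecMul u (Grm m)) j
      = ∑ j, chi (u 0) * (l j * kronPow Hmat m j j') := by
        refine Finset.sum_congr rfl fun j _ => ?_
        rw [hterm j]; ring
    _ = chi (u 0) * ∑ j, l j * kronPow Hmat m j j' := by rw [Finset.mul_sum]
    _ = chi (u 0) * Matrix.vecMul l (kronPow Hmat m) j' := by
        congr 1

/-- Every message has a matching Hadamard column. -/
lemma exists_column (m : ℕ) (u : Fin (m + 1) → ZMod 2) :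
    ∃ j' : Fin (2 ^ m), ∀ i : Fin (m + 1), i.val ≠ 0 →
      (u i = 1 ↔ j'.val.testBit (m - i.val)) := by
  classical
  have hφ : Function.Surjective (fun (j : Fin (2 ^ m)) (t : Fin m) => j.val.testBit t.val) := by
    have hinj : Function.Injective
        (fun (j : Fin (2 ^ m)) (t : Fin m) => j.val.testBit t.val) := by
      intro j₁ j₂ h
      ext
      refine Nat.eq_of_testBit_eq fun t => ?_
      by_cases ht : t < m
      · exact congrFun h ⟨t, ht⟩
      · rw [Nat.testBit_lt_two_pow, Nat.testBit_lt_two_pow]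
        · exact lt_of_lt_of_le j₂.isLt (Nat.pow_le_pow_right (by norm_num) (le_of_not_gt ht))
        · exact lt_of_lt_of_le j₁.isLt (Nat.pow_le_pow_right (by norm_num) (le_of_not_gt ht))
    have hcard : Fintype.card (Fin (2 ^ m)) = Fintype.card (Fin m → Bool) := by simp
    exact (Fintype.bijective_iff_injective_and_card _).mpr ⟨hinj, hcard⟩ |>.surjective
  obtain ⟨j', hj'⟩ := hφ (fun t => decide (u ⟨m - t.val, by omega⟩ = 1))
  refine ⟨j', fun i hi => ?_⟩
  have him : i.val ≤ m := by omega
  have htm : m - i.val < m := by omega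
  have := congrFun hj' ⟨m - i.val, htm⟩
  simp only at this
  have hfin : (⟨m - (m - i.val), by omega⟩ : Fin (m + 1)) = i :=
    Fin.ext (by show m - (m - i.val) = i.val; omega)
  rw [hfin] at this
  simp [this]

/-- The message built from a sign bit and a Hadamard column. -/
def msgOf (m : ℕ) (a : ZMod 2) (j' : Fin (2 ^ m)) : Fin (m + 1) → ZMod 2 :=
  fun i => if i.val = 0 then a else if j'.val.testBit (m - i.val) then 1 else 0

lemma msgOf_corr (m : ℕ) (a : ZMod 2) (j' : Fin (2 ^ m)) :
    ∀ i : Fin (m + 1), i.val ≠ 0 → (msgOf m a j' i = 1 ↔ j'.val.testBit (m - i.val)) := by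
  intro i hi
  simp only [msgOf, hi, if_false]
  by_cases h : j'.val.testBit (m - i.val) <;> simp [h]

lemma msgOf_zero (m : ℕ) (a : ZMod 2) (j' : Fin (2 ^ m)) : msgOf m a j' 0 = a := by
  simp [msgOf]

/-- Main workhorse: for `b : ZMod 2`, the sup over messages with `u i = b` equals the
sup of `|l_WH|` over columns whose bit `m - i` is `b`. -/
lemma main_aux (m : ℕ) (l : Fin (2 ^ m) → ℝ) (i : Fin (m + 1)) (hi : i.val ≠ 0) (b : ZMod 2)
    (j₀ : Fin (2 ^ m)) (hj₀ : (j₀.val.testBit (m - i.val) = true) ↔ b = 1) :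
    sSup {x : ℝ | ∃ u : Fin (m + 1) → ZMod 2, u i = b ∧
          x = ∑ j, l j * bpsk (Matrix.vecMul u (Grm m)) j} =
      sSup {x : ℝ | ∃ j : Fin (2 ^ m), (j.val.testBit (m - i.val) ↔ b = 1) ∧
          x = |Matrix.vecMul l (kronPow Hmat m) j|} := by
  classical
  set W := fun j : Fin (2 ^ m) => Matrix.vecMul l (kronPow Hmat m) j with hW
  set S := {x : ℝ | ∃ u : Fin (m + 1) → ZMod 2, u i = b ∧
      x = ∑ j, l j * bpsk (Matrix.vecMul u (Grm m)) j} with hS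
  set T := {x : ℝ | ∃ j : Fin (2 ^ m), (j.val.testBit (m - i.val) ↔ b = 1) ∧ x = |W j|}
    with hT
  -- T ⊆ S
  have hTS : T ⊆ S := by
    rintro x ⟨j, hjb, rfl⟩
    by_cases hw : 0 ≤ W j
    · refine ⟨msgOf m 0 j, ?_, ?_⟩
      · have := msgOf_corr m 0 j i hi
        rcases zmod2_cases b with hb | hb
        · subst hb
          rcases zmod2_cases (msgOf m 0 j i) with h | h
          · exact h
          · exact absurd (hjb.mp (this.mp h)) (by decide)
        · subst hb
          exact this.mpr (hjb.mpr rfl)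
      · rw [key_sum m l _ j (msgOf_corr m 0 j), msgOf_zero]
        simp [chi, abs_of_nonneg hw]
        rfl
    · refine ⟨msgOf m 1 j, ?_, ?_⟩
      · have := msgOf_corr m 1 j i hi
        rcases zmod2_cases b with hb | hb
        · subst hb
          rcases zmod2_cases (msgOf m 1 j i) with h | h
          · exact h
          · exact absurd (hjb.mp (this.mp h)) (by decide)
        · subst hb
          exact this.mpr (hjb.mpr rfl)
      · rw [key_sum m l _ j (msgOf_corr m 1 j), msgOf_zero]
        have : chi 1 = -1 := rfl
        rw [this, abs_of_neg (lt_of_not_ge hw)]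
        ring
  -- every element of S is dominated by an element of T
  have hST : ∀ x ∈ S, ∃ y ∈ T, x ≤ y := by
    rintro x ⟨u, hub, rfl⟩
    obtain ⟨j', hj'⟩ := exists_column m u
    refine ⟨|W j'|, ⟨j', ?_, rfl⟩, ?_⟩
    · have := hj' i hi
      rcases zmod2_cases b with hb | hb
      · subst hb
        constructor
        · intro h
          exact hub.symm.trans (this.mpr h)
        · intro h
          exact absurd h (by decide)
      · subst hb
        simp [this.mp hub]
    · rw [key_sum m l u j' hj']
      exact chi_mul_le_abs _ _
  -- nonempty and bddAbove
  have hTne : T.Nonempty := ⟨|W j₀|, j₀, by simpa using hj₀, rfl⟩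
  have hSne : S.Nonempty := hTne.mono hTS
  have hSbdd : BddAbove S := by
    have : S ⊆ Set.range (fun u : Fin (m + 1) → ZMod 2 =>
        ∑ j, l j * bpsk (Matrix.vecMul u (Grm m)) j) := by
      rintro x ⟨u, _, rfl⟩; exact ⟨u, rfl⟩
    exact ((Set.finite_range _).subset this).bddAbove
  have hTbdd : BddAbove T := hSbdd.mono hTS
  refine le_antisymm ?_ (csSup_le_csSup hSbdd hTne hTS)
  refine csSup_le hSne fun x hx => ?_
  obtain ⟨y, hyT, hxy⟩ := hST x hx
  exact le_trans hxy (le_csSup hTbdd hyT)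

/-- For RM(m,1) and a message index `i ≥ 2` (here `i.val ≠ 0`), the maximum of
`⟨l, 1-2c⟩` over codewords with `u_i = 0` equals the maximum of `|l_WH(j)|` over the
indices `j ∈ I_{0,i}` of Hadamard columns whose message has `u_i = 0` (namely those
`j` with bit `m - i` equal to 0), and similarly for `u_i = 1` and `I_{1,i}`. -/
theorem stmt18 (m : ℕ) (l : Fin (2 ^ m) → ℝ) (i : Fin (m + 1)) (hi : i.val ≠ 0) :
    (sSup {x : ℝ | ∃ u : Fin (m + 1) → ZMod 2, u i = 0 ∧
          x = ∑ j, l j * bpsk (Matrix.vecMul u (Grm m)) j} =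
        sSup {x : ℝ | ∃ j : Fin (2 ^ m), ¬ j.val.testBit (m - i.val) ∧
          x = |Matrix.vecMul l (kronPow Hmat m) j|}) ∧
      (sSup {x : ℝ | ∃ u : Fin (m + 1) → ZMod 2, u i = 1 ∧
          x = ∑ j, l j * bpsk (Matrix.vecMul u (Grm m)) j} =
        sSup {x : ℝ | ∃ j : Fin (2 ^ m), j.val.testBit (m - i.val) ∧
          x = |Matrix.vecMul l (kronPow Hmat m) j|}) := by
  have him : 1 ≤ i.val := by omega
  have hmge : 1 ≤ m := by have := i.isLt; omega
  have htm : m - i.val < m := by omega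
  constructor
  · have h0 := main_aux m l i hi 0 0 (by simp [Nat.zero_testBit])
    rw [h0]
    congr 1
    ext x
    constructor
    · rintro ⟨j, hj, rfl⟩; exact ⟨j, by simpa using hj, rfl⟩
    · rintro ⟨j, hj, rfl⟩; exact ⟨j, by simpa using hj, rfl⟩
  · have hpow : 2 ^ (m - i.val) < 2 ^ m := Nat.pow_lt_pow_right (by norm_num) htm
    have h1 := main_aux m l i hi 1 ⟨2 ^ (m - i.val), hpow⟩
      (by simp [Nat.testBit_two_pow_self])
    rw [h1]
    congr 1
    ext x
    constructor
    · rintro ⟨j, hj, rfl⟩; exact ⟨j, by simpa using hj, rfl⟩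
    · rintro ⟨j, hj, rfl⟩; exact ⟨j, by simpa using hj, rfl⟩
end
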